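/- Let H be a complex Hilbert space and let v1, v2, v3, e1, e2 be minimal (rank-one) partial isometries in B(H) satisfying e1 ⊥ e2, v1 ⊥ v2, v1 ⊥ v3, -v1 + v3 = e1 - e2, and v1 + v2 = e1 + e2. Then v1 = e2 and v2 = e1 = v3. -/

import Mathlib

open scoped InnerProductSpace

variable {H : Type*} [NormedAddCommGroup H] [InnerProductSpace ℂ H] [CompleteSpace H]

/-- The rank-one operator `η ⊗ ξ : x ↦ ⟨x, ξ⟩ η`. -/
noncomputable def rankOne (η ξ : H) : H →L[ℂ] H := (innerSL ℂ ξ).smulRight η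

/-- Minimal (rank-one) partial isometries in `B(H)` are exactly the operators `η ⊗ ξ`
with `ξ, η` unit vectors. -/
def IsMinPI (v : H →L[ℂ] H) : Prop := ∃ ξ η : H, ‖ξ‖ = 1 ∧ ‖η‖ = 1 ∧ v = rankOne η ξ

/-- Orthogonality of operators: `a b* = 0` and `b* a = 0`. -/
def Orth (a b : H →L[ℂ] H) : Prop := a * star b = 0 ∧ star b * a = 0

lemma rankOne_apply (η ξ x : H) : rankOne η ξ x = (inner ℂ ξ x : ℂ) • η := rfl

lemma star_rankOne (η ξ : H) : star (rankOne η ξ) = rankOne ξ η := by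
  rw [ContinuousLinearMap.star_eq_adjoint]
  symm
  rw [ContinuousLinearMap.eq_adjoint_iff]
  intro x y
  simp [rankOne_apply, inner_smul_left, inner_smul_right, mul_comm]

lemma rankOne_comp (η ξ b a : H) :
    rankOne η ξ * rankOne b a = (inner ℂ ξ b : ℂ) • rankOne η a := by
  ext x
  simp [rankOne_apply, ContinuousLinearMap.mul_apply, inner_smul_right, smul_smul,
    mul_comm]

theorem stmt0 (v1 v2 v3 e1 e2 : H →L[ℂ] H)
    (hv1 : IsMinPI v1) (hv2 : IsMinPI v2) (hv3 : IsMinPI v3)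
    (he1 : IsMinPI e1) (he2 : IsMinPI e2)
    (he12 : Orth e1 e2) (hv12 : Orth v1 v2) (hv13 : Orth v1 v3)
    (h1 : -v1 + v3 = e1 - e2) (h2 : v1 + v2 = e1 + e2) :
    v1 = e2 ∧ v2 = e1 ∧ v3 = e1 := by
  obtain ⟨ξ, η, hξ, hη, hv1e⟩ := hv1
  obtain ⟨a, b, ha, hb, he2e⟩ := he2
  have hξξ : (inner ℂ ξ ξ : ℂ) = 1 := by
    rw [inner_self_eq_norm_sq_to_K, hξ]; norm_num
  have haa : (inner ℂ a a : ℂ) = 1 := by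
    rw [inner_self_eq_norm_sq_to_K, ha]; norm_num
  have hηη : (inner ℂ η η : ℂ) = 1 := by
    rw [inner_self_eq_norm_sq_to_K, hη]; norm_num
  have hηne : η ≠ 0 := by intro h; rw [h, norm_zero] at hη; norm_num at hη
  -- 2 e2 = 2 v1 + v2 - v3
  have key : e2 + e2 = v1 + v1 + v2 - v3 := by
    have h : v1 + v2 - (-v1 + v3) = e1 + e2 - (e1 - e2) := by rw [h1, h2]
    calc e2 + e2 = e1 + e2 - (e1 - e2) := by abel
      _ = v1 + v2 - (-v1 + v3) := h.symm
      _ = v1 + v1 + v2 - v3 := by abel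
  have cancel : ∀ x y : H →L[ℂ] H, x + x = y + y → x = y := by
    intro x y h
    have h2 : (2 : ℂ) • x = (2 : ℂ) • y := by rw [two_smul, two_smul]; exact h
    exact smul_right_injective _ two_ne_zero h2
  have keyR : v1 * star e2 = v1 * star v1 := by
    apply cancel
    have h := congrArg (fun w => v1 * star w) key
    simp only [star_add, star_sub, mul_add, mul_sub] at h
    rw [hv12.1, hv13.1] at h
    simpa using h
  have keyL : star e2 * v1 = star v1 * v1 := by
    apply cancel
    have h := congrArg (fun w => star w * v1) key
    simp only [star_add, star_sub, add_mul, sub_mul] at h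
    rw [hv12.2, hv13.2] at h
    simpa using h
  rw [hv1e, he2e, star_rankOne, star_rankOne, rankOne_comp, rankOne_comp, hξξ,
    one_smul] at keyR
  rw [hv1e, he2e, star_rankOne, star_rankOne, rankOne_comp, rankOne_comp, hηη,
    one_smul] at keyL
  -- keyR : ⟪ξ,a⟫ • rankOne η b = rankOne η η
  -- keyL : ⟪b,η⟫ • rankOne a ξ = rankOne ξ ξ
  set d : ℂ := inner ℂ b η with hd
  have hξa : ξ = d • a := by
    have h := congrArg (fun T => T ξ) keyL
    simp only [ContinuousLinearMap.smul_apply, rankOne_apply, hξξ, one_smul] at h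
    exact h.symm
  have hdnorm : ‖d‖ = 1 := by
    have h : ‖ξ‖ = ‖d • a‖ := by rw [← hξa]
    rw [hξ, norm_smul, ha, mul_one] at h
    exact h.symm
  have hc : (inner ℂ ξ a : ℂ) = starRingEnd ℂ d := by
    rw [hξa, inner_smul_left, haa, mul_one]
  have hηb : η = d • b := by
    apply ext_inner_right ℂ
    intro x
    have h := congrArg (fun T => T x) keyR
    simp only [ContinuousLinearMap.smul_apply, rankOne_apply, smul_smul] at h
    have h' : ((inner ℂ ξ a : ℂ) * inner ℂ b x) = (inner ℂ η x : ℂ) :=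
      smul_left_injective ℂ hηne h
    rw [← h', hc, inner_smul_left]
  have hdd : starRingEnd ℂ d * d = 1 := by
    rw [mul_comm, Complex.mul_conj]
    norm_cast
    rw [← Complex.sq_norm, hdnorm, one_pow]
  have hv1e2 : v1 = e2 := by
    rw [hv1e, he2e]
    ext x
    rw [rankOne_apply, rankOne_apply, hξa, hηb, inner_smul_left, smul_smul]
    congr 1
    linear_combination (inner ℂ a x : ℂ) * hdd
  refine ⟨hv1e2, ?_, ?_⟩
  · have : v2 = e1 + e2 - v1 := by rw [← h2]; abel
    rw [this, hv1e2]; abel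
  · have : v3 = e1 - e2 + v1 := by rw [← h1]; abel
    rw [this, hv1e2]; abel
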